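/- arXiv:1711.00697 — 2 statements merged into one kernel-verified Lean document; each statement's English description precedes it below -/
import Mathlib

section
/- Let T be a positive semidefinite operator on ℂ^s and let φ be a uniformly distributed random unit vector in ℂ^s. Then E[⟨φ, Tφ⟩] = tr(T)/s, and for every positive integer p, E[⟨φ, Tφ⟩^p] ≤ (tr T)^p / C(s+p−1, p) ≤ (p·tr(T)/s)^p, where C(s+p−1, p) denotes the binomial coefficient. -/
open scoped Kronecker ENNReal ComplexOrder
open Matrix MeasureTheory

noncomputable section
attribute [local instance] Classical.propDecidable

/-- The singular values of a square complex matrix. -/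
def singularValues {m : Type*} [Fintype m] [DecidableEq m] (X : Matrix m m ℂ) : m → ℝ :=
  fun i => Real.sqrt ((Matrix.posSemidef_conjTranspose_mul_self X).1.eigenvalues i)

/-- The Schatten `p`-norm of a square complex matrix (`p = ⊤` giving the operator norm). -/
def schattenNorm {m : Type*} [Fintype m] [DecidableEq m] (p : ℝ≥0∞) (X : Matrix m m ℂ) : ℝ :=
  if p = ⊤ then ⨆ i, singularValues X i
  else (∑ i, singularValues X i ^ p.toReal) ^ (1 / p.toReal)

/-- `Φ` has the Kraus decomposition given by the family `K`. -/
def HasKraus {a b : Type*} [Fintype a] [Fintype b] {s : ℕ}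
    (Φ : Matrix a a ℂ → Matrix b b ℂ) (K : Fin s → Matrix b a ℂ) : Prop :=
  ∀ X, Φ X = ∑ i, K i * X * (K i)ᴴ

/-- Completely positive map: admits some Kraus decomposition. -/
def IsCP {a b : Type*} [Fintype a] [Fintype b]
    (Φ : Matrix a a ℂ → Matrix b b ℂ) : Prop :=
  ∃ (s : ℕ) (K : Fin s → Matrix b a ℂ), HasKraus Φ K

/-- Trace preserving map. -/
def IsTP {a b : Type*} [Fintype a] [Fintype b]
    (Φ : Matrix a a ℂ → Matrix b b ℂ) : Prop :=
  ∀ X, (Φ X).trace = X.trace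

/-- Completely positive and trace preserving map. -/
def IsCPTP {a b : Type*} [Fintype a] [Fintype b]
    (Φ : Matrix a a ℂ → Matrix b b ℂ) : Prop :=
  IsCP Φ ∧ IsTP Φ

/-- The Kraus rank: minimal number of Kraus operators. -/
def krausRank {a b : Type*} [Fintype a] [Fintype b]
    (Φ : Matrix a a ℂ → Matrix b b ℂ) : ℕ :=
  sInf {s : ℕ | ∃ K : Fin s → Matrix b a ℂ, HasKraus Φ K}

/-- A density operator: positive semidefinite with trace one. -/
def IsDensity {a : Type*} [Fintype a] [DecidableEq a] (ρ : Matrix a a ℂ) : Prop :=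
  ρ.PosSemidef ∧ ρ.trace = 1

/-- Loewner order. -/
def loewnerLE {a : Type*} [Fintype a] (X Y : Matrix a a ℂ) : Prop :=
  (Y - X).PosSemidef

/-- von Neumann entropy. -/
def vonNeumannEntropy {a : Type*} [Fintype a] [DecidableEq a] (ρ : Matrix a a ℂ) : ℝ :=
  if h : ρ.IsHermitian then -∑ i, h.eigenvalues i * Real.log (h.eigenvalues i) else 0

/-- Rényi entropy of order `p ∈ (1,∞]`. -/
def renyiEntropy {a : Type*} [Fintype a] [DecidableEq a] (p : ℝ≥0∞) (ρ : Matrix a a ℂ) : ℝ :=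
  if p = ⊤ then -Real.log (schattenNorm ⊤ ρ)
  else -(p.toReal / (p.toReal - 1)) * Real.log (schattenNorm p ρ)

/-- The factor `p/(p-1)`, read as `1` for `p = ∞`. -/
def pFactor (p : ℝ≥0∞) : ℝ := if p = ⊤ then 1 else p.toReal / (p.toReal - 1)

/-- Square root of a positive semidefinite matrix (junk value otherwise). -/
def psdSqrt {a : Type*} [Fintype a] [DecidableEq a] (ρ : Matrix a a ℂ) : Matrix a a ℂ :=
  if h : ρ.PosSemidef then
    (h.1.eigenvectorUnitary : Matrix a a ℂ) * diagonal ((↑) ∘ (√·) ∘ h.1.eigenvalues) *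
      (star h.1.eigenvectorUnitary : Matrix a a ℂ)
  else 0

/-- Fidelity `F(σ, ω) = ‖√σ √ω‖₁`. -/
def fidelity {a : Type*} [Fintype a] [DecidableEq a] (σ ω : Matrix a a ℂ) : ℝ :=
  schattenNorm 1 (psdSqrt σ * psdSqrt ω)

/-- Rank-one projection `|v⟩⟨v|`. -/
def projVec {a : Type*} (v : a → ℂ) : Matrix a a ℂ :=
  Matrix.of fun i j => v i * star (v j)

/-- Partial trace over the second tensor factor. -/
def ptraceSnd {b e : Type*} [Fintype e] (M : Matrix (b × e) (b × e) ℂ) : Matrix b b ℂ :=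
  Matrix.of fun i j => ∑ k, M (i, k) (j, k)

/-- Partial trace over the first tensor factor. -/
def ptraceFst {b e : Type*} [Fintype b] (M : Matrix (b × e) (b × e) ℂ) : Matrix e e ℂ :=
  Matrix.of fun k l => ∑ i, M (i, k) (i, l)

/-- The channel `ρ ↦ tr_E (V ρ V†)` associated to an isometry `V : A → B ⊗ E`. -/
def stineChan {a b e : Type*} [Fintype a] [Fintype b] [Fintype e]
    (V : Matrix (b × e) a ℂ) : Matrix a a ℂ → Matrix b b ℂ :=
  fun ρ => ptraceSnd (V * ρ * Vᴴ)

/-- The CP map `N_φ : ρ ↦ |E| tr_E ((1 ⊗ |φ⟩⟨φ|) V ρ V† (1 ⊗ |φ⟩⟨φ|))`. -/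
def stineChanPinned {a b e : Type*} [Fintype a] [Fintype b] [Fintype e] [DecidableEq b]
    (V : Matrix (b × e) a ℂ) (φ : e → ℂ) : Matrix a a ℂ → Matrix b b ℂ :=
  fun ρ => (Fintype.card e : ℂ) •
    ptraceSnd (((1 : Matrix b b ℂ) ⊗ₖ projVec φ) * (V * ρ * Vᴴ) * ((1 : Matrix b b ℂ) ⊗ₖ projVec φ))

/-- `⟨y| M |y⟩`. -/
def qForm {b : Type*} [Fintype b] (y : b → ℂ) (M : Matrix b b ℂ) : ℂ :=
  star y ⬝ᵥ M *ᵥ y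

/-- The uniform (Haar, rotation-invariant) probability measure on the unit sphere of `ℂ^s`. -/
def IsUniformOnSphere {s : ℕ} (μ : Measure (Fin s → ℂ)) : Prop :=
  IsProbabilityMeasure μ ∧
  μ {v : Fin s → ℂ | ∑ i, ‖v i‖ ^ 2 = 1}ᶜ = 0 ∧
  ∀ U ∈ Matrix.unitaryGroup (Fin s) ℂ, μ.map (fun v => U *ᵥ v) = μ


section AuxStmt5

lemma sum_if_pair {ι M : Type*} [Fintype ι] [DecidableEq ι] [AddCommMonoid M]
    {a b : ι} (hab : a ≠ b) (A B : M) :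
    (∑ k, if k = a then A else if k = b then B else 0) = A + B := by
  have h : ∀ k : ι, (if k = a then A else if k = b then B else 0)
      = (if k = a then A else 0) + (if k = b then B else 0) := by
    intro k
    by_cases h1 : k = a
    · subst h1; simp [hab]
    · simp [h1]
  simp_rw [h, Finset.sum_add_distrib, Finset.sum_ite_eq', Finset.mem_univ, if_true]

lemma sum_if_single {ι M : Type*} [Fintype ι] [DecidableEq ι] [AddCommMonoid M]
    (a : ι) (f : ι → M) :
    (∑ k, if k = a then f k else 0) = f a := by
  rw [Finset.sum_ite_eq', if_pos (Finset.mem_univ a)]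

/-- rotation unitary on coordinates 0,1 -/
noncomputable def rotMat (m : ℕ) (c t : ℝ) (ω : ℂ) : Matrix (Fin (m+2)) (Fin (m+2)) ℂ :=
  Matrix.of fun i j =>
    if i = 0 then (if j = 0 then (c:ℂ) else if j = 1 then t * ω else 0)
    else if i = 1 then (if j = 0 then -(t * (starRingEnd ℂ) ω) else if j = 1 then (c:ℂ) else 0)
    else if i = j then 1 else 0

lemma rotMat_mem (m : ℕ) (c t : ℝ) (ω : ℂ) (hct : c^2 + t^2 = 1)
    (hω : ω * (starRingEnd ℂ) ω = 1) :
    rotMat m c t ω ∈ Matrix.unitaryGroup (Fin (m+2)) ℂ := by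
  rw [Matrix.mem_unitaryGroup_iff]
  ext i j
  rw [Matrix.mul_apply]
  simp only [Matrix.star_apply]
  have h01 : (0 : Fin (m+2)) ≠ 1 := by simp [Fin.ext_iff]
  have hc2 : ((c:ℂ))^2 + (t:ℂ)^2 = 1 := by exact_mod_cast congrArg (Complex.ofReal) hct
  have hωc : (starRingEnd ℂ) ((starRingEnd ℂ) ω) = ω := Complex.conj_conj ω
  rcases eq_or_ne i 0 with rfl | hi0
  · rcases eq_or_ne j 0 with rfl | hj0
    · have h : ∀ k : Fin (m+2), rotMat m c t ω 0 k * star (rotMat m c t ω 0 k)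
          = (if k = 0 then (c:ℂ) * star ((c:ℂ)) else if k = 1 then ((t:ℂ)*ω) * star ((t:ℂ)*ω) else 0) := by
        intro k
        by_cases hk0 : k = 0
        · subst hk0; simp [rotMat, h01]
        · by_cases hk1 : k = 1 <;> simp [rotMat, hk0, hk1, h01]
      rw [Finset.sum_congr rfl (fun k _ => h k), sum_if_pair h01, Matrix.one_apply_eq]
      simp only [star_mul', Complex.star_def, Complex.conj_ofReal]
      linear_combination hc2 + (t:ℂ)^2 * hω
    · rcases eq_or_ne j 1 with rfl | hj1
      · have h : ∀ k : Fin (m+2), rotMat m c t ω 0 k * star (rotMat m c t ω 1 k)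
            = (if k = 0 then (c:ℂ) * star (-((t:ℂ)* (starRingEnd ℂ) ω)) else if k = 1 then ((t:ℂ)*ω) * star ((c:ℂ)) else 0) := by
          intro k
          by_cases hk0 : k = 0
          · subst hk0; simp [rotMat, h01]
          · by_cases hk1 : k = 1 <;> simp [rotMat, hk0, hk1, h01]
        rw [Finset.sum_congr rfl (fun k _ => h k), sum_if_pair h01, Matrix.one_apply_ne h01]
        simp only [star_neg, star_mul', Complex.star_def, Complex.conj_ofReal, hωc]
        ring
      · have h : ∀ k : Fin (m+2), rotMat m c t ω 0 k * star (rotMat m c t ω j k)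
            = (if k = 0 then (c:ℂ) * star (rotMat m c t ω j 0) else if k = 1 then ((t:ℂ)*ω) * star (rotMat m c t ω j 1) else 0) := by
          intro k
          by_cases hk0 : k = 0
          · subst hk0; simp [rotMat, h01]
          · by_cases hk1 : k = 1 <;> simp [rotMat, hk0, hk1, h01]
        rw [Finset.sum_congr rfl (fun k _ => h k), sum_if_pair h01, Matrix.one_apply_ne (Ne.symm hj0)]
        have e0 : rotMat m c t ω j 0 = 0 := by simp [rotMat, hj0, hj1]
        have e1 : rotMat m c t ω j 1 = 0 := by simp [rotMat, hj0, hj1]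
        rw [e0, e1]
        simp
  · rcases eq_or_ne i 1 with rfl | hi1
    · rcases eq_or_ne j 0 with rfl | hj0
      · have h : ∀ k : Fin (m+2), rotMat m c t ω 1 k * star (rotMat m c t ω 0 k)
            = (if k = 0 then -((t:ℂ)*(starRingEnd ℂ) ω) * star ((c:ℂ)) else if k = 1 then (c:ℂ) * star ((t:ℂ)*ω) else 0) := by
          intro k
          by_cases hk0 : k = 0
          · subst hk0; simp [rotMat, h01]
          · by_cases hk1 : k = 1 <;> simp [rotMat, hk0, hk1, h01]
        rw [Finset.sum_congr rfl (fun k _ => h k), sum_if_pair h01, Matrix.one_apply_ne h01.symm]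
        simp only [star_mul', Complex.star_def, Complex.conj_ofReal]
        ring
      · rcases eq_or_ne j 1 with rfl | hj1
        · have h : ∀ k : Fin (m+2), rotMat m c t ω 1 k * star (rotMat m c t ω 1 k)
              = (if k = 0 then (-((t:ℂ)*(starRingEnd ℂ) ω)) * star (-((t:ℂ)*(starRingEnd ℂ) ω)) else if k = 1 then (c:ℂ) * star ((c:ℂ)) else 0) := by
            intro k
            by_cases hk0 : k = 0
            · subst hk0; simp [rotMat, h01]
            · by_cases hk1 : k = 1 <;> simp [rotMat, hk0, hk1, h01]
          rw [Finset.sum_congr rfl (fun k _ => h k), sum_if_pair h01, Matrix.one_apply_eq]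
          simp only [star_neg, star_mul', Complex.star_def, Complex.conj_ofReal, hωc]
          linear_combination hc2 + (t:ℂ)^2 * hω
        · have h : ∀ k : Fin (m+2), rotMat m c t ω 1 k * star (rotMat m c t ω j k)
              = (if k = 0 then -((t:ℂ)*(starRingEnd ℂ) ω) * star (rotMat m c t ω j 0) else if k = 1 then (c:ℂ) * star (rotMat m c t ω j 1) else 0) := by
            intro k
            by_cases hk0 : k = 0
            · subst hk0; simp [rotMat, h01]
            · by_cases hk1 : k = 1 <;> simp [rotMat, hk0, hk1, h01]
          rw [Finset.sum_congr rfl (fun k _ => h k), sum_if_pair h01, Matrix.one_apply_ne (Ne.symm hj1)]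
          have e0 : rotMat m c t ω j 0 = 0 := by simp [rotMat, hj0, hj1]
          have e1 : rotMat m c t ω j 1 = 0 := by simp [rotMat, hj0, hj1]
          rw [e0, e1]
          simp
    · have h : ∀ k : Fin (m+2), rotMat m c t ω i k * star (rotMat m c t ω j k)
          = (if k = i then star (rotMat m c t ω j i) else 0) := by
        intro k
        by_cases hk : k = i
        · subst hk; simp [rotMat, hi0, hi1]
        · have : rotMat m c t ω i k = 0 := by
            simp only [rotMat, Matrix.of_apply, if_neg hi0, if_neg hi1, ite_eq_right_iff]
            intro h; exact absurd h.symm hk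
          rw [this, zero_mul, if_neg hk]
      rw [Finset.sum_congr rfl (fun k _ => h k), sum_if_single]
      rcases eq_or_ne j 0 with rfl | hj0
      · have e0 : rotMat m c t ω 0 i = 0 := by simp [rotMat, hi0, hi1]
        rw [e0, Matrix.one_apply_ne hi0, star_zero]
      · rcases eq_or_ne j 1 with rfl | hj1
        · have e1 : rotMat m c t ω 1 i = 0 := by simp [rotMat, hi0, hi1]
          rw [e1, Matrix.one_apply_ne hi1, star_zero]
        · by_cases hij : i = j
          · subst hij
            have : rotMat m c t ω i i = 1 := by simp [rotMat, hi0, hi1]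
            rw [this, Matrix.one_apply_eq, star_one]
          · have : rotMat m c t ω j i = 0 := by
              simp only [rotMat, Matrix.of_apply, if_neg hj0, if_neg hj1, ite_eq_right_iff]
              intro h; exact absurd h.symm hij
            rw [this, Matrix.one_apply_ne hij, star_zero]

lemma rotMat_mulVec_zero (m : ℕ) (c t : ℝ) (ω : ℂ) (v : Fin (m+2) → ℂ) :
    (rotMat m c t ω *ᵥ v) 0 = c * v 0 + t * ω * v 1 := by
  have h01 : (0 : Fin (m+2)) ≠ 1 := by simp [Fin.ext_iff]
  show (∑ j, rotMat m c t ω 0 j * v j) = _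
  have h : ∀ j : Fin (m+2), rotMat m c t ω 0 j * v j
      = (if j = 0 then (c:ℂ) * v 0 else if j = 1 then (t:ℂ) * ω * v 1 else 0) := by
    intro j
    by_cases hj0 : j = 0
    · subst hj0; simp [rotMat, h01]
    · by_cases hj1 : j = 1 <;> simp [rotMat, hj0, hj1, h01, mul_assoc]
  rw [Finset.sum_congr rfl (fun k _ => h k), sum_if_pair h01]



lemma sum_if_single' {ι M : Type*} [Fintype ι] [DecidableEq ι] [AddCommMonoid M]
    (a : ι) (f : ι → M) :
    (∑ k, if k = a then f k else 0) = f a := by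
  rw [Finset.sum_ite_eq', if_pos (Finset.mem_univ a)]

/-- permutation matrix -/
def permMat (s : ℕ) (σ : Equiv.Perm (Fin s)) : Matrix (Fin s) (Fin s) ℂ :=
  Matrix.of fun i j => if σ j = i then 1 else 0

lemma permMat_mem (s : ℕ) (σ : Equiv.Perm (Fin s)) :
    permMat s σ ∈ Matrix.unitaryGroup (Fin s) ℂ := by
  rw [Matrix.mem_unitaryGroup_iff]
  ext i j
  rw [Matrix.mul_apply]
  simp only [Matrix.star_apply]
  have h : ∀ k : Fin s, permMat s σ i k * star (permMat s σ j k)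
      = (if k = σ.symm i then star (permMat s σ j k) else 0) := by
    intro k
    by_cases hk : k = σ.symm i
    · subst hk; simp [permMat]
    · have : permMat s σ i k = 0 := by
        simp only [permMat, Matrix.of_apply, ite_eq_right_iff]
        intro h'; exact absurd (σ.symm_apply_eq.mpr h'.symm).symm hk
      rw [this, zero_mul, if_neg hk]
  rw [Finset.sum_congr rfl (fun k _ => h k), sum_if_single']
  by_cases hij : i = j
  · subst hij; simp [permMat]
  · have : permMat s σ j (σ.symm i) = 0 := by
      simp only [permMat, Matrix.of_apply, Equiv.apply_symm_apply, ite_eq_right_iff]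
      intro h'; exact absurd h' hij
    rw [this, star_zero, Matrix.one_apply_ne hij]

lemma permMat_mulVec (s : ℕ) (σ : Equiv.Perm (Fin s)) (v : Fin s → ℂ) (i : Fin s) :
    (permMat s σ *ᵥ v) i = v (σ.symm i) := by
  show (∑ j, permMat s σ i j * v j) = _
  have h : ∀ j : Fin s, permMat s σ i j * v j = (if j = σ.symm i then v j else 0) := by
    intro j
    by_cases hj : j = σ.symm i
    · subst hj; simp [permMat]
    · have : permMat s σ i j = 0 := by
        simp only [permMat, Matrix.of_apply, ite_eq_right_iff]
        intro h'; exact absurd (σ.symm_apply_eq.mpr h'.symm).symm hj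
      rw [this, zero_mul, if_neg hj]
  rw [Finset.sum_congr rfl (fun k _ => h k), sum_if_single']

section Meas
variable {s : ℕ} (μ : Measure (Fin s → ℂ)) (hμ : IsUniformOnSphere μ)

lemma ae_sphere (hμ : IsUniformOnSphere μ) :
    ∀ᵐ v ∂μ, ∑ i, Complex.normSq (v i) = 1 := by
  rw [ae_iff]
  have hset : {v : Fin s → ℂ | ¬ ∑ i, Complex.normSq (v i) = 1}
      = {v : Fin s → ℂ | ∑ i, ‖v i‖ ^ 2 = 1}ᶜ := by
    ext v
    simp [Complex.sq_norm]
  rw [hset]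
  exact hμ.2.1

lemma continuous_mulVecFun (U : Matrix (Fin s) (Fin s) ℂ) :
    Continuous (fun v : Fin s → ℂ => U *ᵥ v) := by
  apply continuous_pi
  intro i
  show Continuous fun v : Fin s → ℂ => ∑ j, U i j * v j
  exact continuous_finset_sum _ fun j _ => continuous_const.mul (continuous_apply j)

lemma integral_unitary (hμ : IsUniformOnSphere μ) {U : Matrix (Fin s) (Fin s) ℂ}
    (hU : U ∈ Matrix.unitaryGroup (Fin s) ℂ)
    (f : (Fin s → ℂ) → ℝ) (hf : Continuous f) :
    ∫ v, f (U *ᵥ v) ∂μ = ∫ v, f v ∂μ := by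
  conv_rhs => rw [← hμ.2.2 U hU]
  rw [integral_map (continuous_mulVecFun U).aemeasurable hf.aestronglyMeasurable]

lemma integrable_of_bound (hμ : IsUniformOnSphere μ) (f : (Fin s → ℂ) → ℝ) (hf : Continuous f)
    (C : ℝ) (hC : ∀ v, ∑ i, Complex.normSq (v i) = 1 → |f v| ≤ C) :
    Integrable f μ := by
  have : IsProbabilityMeasure μ := hμ.1
  refine Integrable.mono' (integrable_const C) hf.aestronglyMeasurable ?_
  filter_upwards [ae_sphere μ hμ] with v hv
  simpa using hC v hv

lemma integral_coord (hμ : IsUniformOnSphere μ) (σ : Equiv.Perm (Fin s))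
    (f : (Fin s → ℂ) → ℝ) (hf : Continuous f) :
    ∫ v, f (fun i => v (σ.symm i)) ∂μ = ∫ v, f v ∂μ := by
  have := integral_unitary μ hμ (permMat_mem s σ) f hf
  rw [← this]
  congr 1
  ext v
  congr 1
  ext i
  rw [permMat_mulVec]

end Meas


lemma int_abs_lt_dvd (a : ℤ) (N : ℕ) (h : |a| < N) (hd : (N:ℤ) ∣ a) : a = 0 := by
  rcases hd with ⟨k, rfl⟩
  rcases eq_or_ne k 0 with rfl | hk
  · simp
  · exfalso
    have : (N:ℤ) * 1 ≤ |(N:ℤ) * k| := by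
      rw [abs_mul, abs_of_nonneg (by positivity : (0:ℤ) ≤ (N:ℤ))]
      exact mul_le_mul_of_nonneg_left (Int.one_le_abs hk) (by positivity)
    omega

lemma roots_avg (q N : ℕ) (hqN : q < N) (z₀ z₁ : ℂ) :
    ∑ j ∈ Finset.range N,
        ((z₀ + Complex.exp (2*Real.pi*Complex.I/N)^j * z₁)
          * (starRingEnd ℂ) (z₀ + Complex.exp (2*Real.pi*Complex.I/N)^j * z₁))^q
    = N * ∑ a ∈ Finset.range (q+1),
        (q.choose a : ℂ)^2 * (z₀ * (starRingEnd ℂ) z₀)^a * (z₁ * (starRingEnd ℂ) z₁)^(q-a) := by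
  have hN : 0 < N := lt_of_le_of_lt (Nat.zero_le q) hqN
  set ζ : ℂ := Complex.exp (2*Real.pi*Complex.I/N) with hζdef
  have hprim : IsPrimitiveRoot ζ N := Complex.isPrimitiveRoot_exp N hN.ne'
  have hζ1 : ζ^N = 1 := hprim.pow_eq_one
  have hζ0 : ζ ≠ 0 := fun h => by simp [h, zero_pow hN.ne'] at hζ1
  have hre : (2*(Real.pi:ℂ)*Complex.I/N) = ((2*Real.pi/N : ℝ):ℂ) * Complex.I := by
    push_cast; ring
  have habs : ζ * (starRingEnd ℂ) ζ = 1 := by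
    rw [Complex.mul_conj]
    norm_cast
    rw [Complex.normSq_eq_norm_sq, hζdef, hre, Complex.norm_exp_ofReal_mul_I]
    norm_num
  have hconj : (starRingEnd ℂ) ζ = ζ^(N-1) := by
    have h2 : ζ * ζ^(N-1) = 1 := by
      rw [← pow_succ', Nat.sub_add_cancel hN]; exact hζ1
    exact mul_left_cancel₀ hζ0 (habs.trans h2.symm)
  -- the inner geometric sums
  have hS : ∀ a ∈ Finset.range (q+1), ∀ b ∈ Finset.range (q+1),
      (∑ j ∈ Finset.range N, (ζ^((q-a) + (N-1)*(q-b)))^j) = if a = b then (N:ℂ) else 0 := by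
    intro a ha b hb
    rw [Finset.mem_range, Nat.lt_succ_iff] at ha hb
    by_cases hab : a = b
    · subst hab
      have he : (q-a) + (N-1)*(q-a) = N * (q-a) := by
        have h1 : N - 1 + 1 = N := Nat.succ_pred_eq_of_pos hN
        calc (q-a) + (N-1)*(q-a) = (N-1+1) * (q-a) := by ring
          _ = N * (q-a) := by rw [h1]
      rw [he, pow_mul, hζ1, one_pow, if_pos rfl]
      simp
    · rw [if_neg hab]
      have he : ζ^((q-a) + (N-1)*(q-b)) ≠ 1 := by
        intro h1
        have hdvd : N ∣ (q-a) + (N-1)*(q-b) := (hprim.pow_eq_one_iff_dvd _).mp h1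
        have hz : (((q-a) + (N-1)*(q-b) : ℕ) : ℤ) = ((b:ℤ) - a) + N * ((q:ℤ) - b) := by
          push_cast [Nat.cast_sub ha, Nat.cast_sub hb, Nat.cast_sub hN]
          ring
        have hd2 : (N:ℤ) ∣ ((b:ℤ) - a) := by
          have : (N:ℤ) ∣ (((q-a) + (N-1)*(q-b) : ℕ) : ℤ) := Int.natCast_dvd_natCast.mpr hdvd
          rw [hz] at this
          exact (dvd_add_right ⟨(q:ℤ) - b, rfl⟩).mp (by rwa [add_comm] at this)
        have : (b:ℤ) - a = 0 := by
          apply int_abs_lt_dvd _ N _ hd2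
          rw [abs_sub_lt_iff]
          constructor <;> [skip; skip] <;>
            { push_cast; omega }
        exact hab (by omega)
      rw [geom_sum_eq he, ← pow_mul, mul_comm ((q-a) + (N-1)*(q-b)) N, pow_mul, hζ1, one_pow]
      simp
  -- expansion
  have hexp : ∀ j, ((z₀ + ζ^j * z₁) * (starRingEnd ℂ) (z₀ + ζ^j * z₁))^q
      = ∑ a ∈ Finset.range (q+1), ∑ b ∈ Finset.range (q+1),
        (ζ^((q-a) + (N-1)*(q-b)))^j *
          ((z₀^a * z₁^(q-a) * (q.choose a : ℂ)) *
           (((starRingEnd ℂ) z₀)^b * ((starRingEnd ℂ) z₁)^(q-b) * (q.choose b : ℂ))) := by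
    intro j
    rw [mul_pow, map_add, _root_.map_mul, map_pow, hconj, add_pow, add_pow, Finset.sum_mul_sum]
    refine Finset.sum_congr rfl fun a _ => Finset.sum_congr rfl fun b _ => ?_
    ring
  calc ∑ j ∈ Finset.range N, ((z₀ + ζ^j * z₁) * (starRingEnd ℂ) (z₀ + ζ^j * z₁))^q
      = ∑ j ∈ Finset.range N, ∑ a ∈ Finset.range (q+1), ∑ b ∈ Finset.range (q+1),
        (ζ^((q-a) + (N-1)*(q-b)))^j *
          ((z₀^a * z₁^(q-a) * (q.choose a : ℂ)) *
           (((starRingEnd ℂ) z₀)^b * ((starRingEnd ℂ) z₁)^(q-b) * (q.choose b : ℂ))) :=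
        Finset.sum_congr rfl fun j _ => hexp j
    _ = ∑ a ∈ Finset.range (q+1), ∑ b ∈ Finset.range (q+1), ∑ j ∈ Finset.range N,
        (ζ^((q-a) + (N-1)*(q-b)))^j *
          ((z₀^a * z₁^(q-a) * (q.choose a : ℂ)) *
           (((starRingEnd ℂ) z₀)^b * ((starRingEnd ℂ) z₁)^(q-b) * (q.choose b : ℂ))) := by
        rw [Finset.sum_comm]
        exact Finset.sum_congr rfl fun a _ => Finset.sum_comm
    _ = ∑ a ∈ Finset.range (q+1), ∑ b ∈ Finset.range (q+1),
        (if a = b then (N:ℂ) else 0) *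
          ((z₀^a * z₁^(q-a) * (q.choose a : ℂ)) *
           (((starRingEnd ℂ) z₀)^b * ((starRingEnd ℂ) z₁)^(q-b) * (q.choose b : ℂ))) := by
        refine Finset.sum_congr rfl fun a ha => Finset.sum_congr rfl fun b hb => ?_
        rw [← Finset.sum_mul, hS a ha b hb]
    _ = ∑ a ∈ Finset.range (q+1), (N:ℂ) *
          ((z₀^a * z₁^(q-a) * (q.choose a : ℂ)) *
           (((starRingEnd ℂ) z₀)^a * ((starRingEnd ℂ) z₁)^(q-a) * (q.choose a : ℂ))) := by
        refine Finset.sum_congr rfl fun a ha => ?_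
        have h1 : ∀ b ∈ Finset.range (q+1),
            (if a = b then (N:ℂ) else 0) *
              ((z₀^a * z₁^(q-a) * (q.choose a : ℂ)) *
               (((starRingEnd ℂ) z₀)^b * ((starRingEnd ℂ) z₁)^(q-b) * (q.choose b : ℂ)))
            = (if b = a then (N:ℂ) *
              ((z₀^a * z₁^(q-a) * (q.choose a : ℂ)) *
               (((starRingEnd ℂ) z₀)^b * ((starRingEnd ℂ) z₁)^(q-b) * (q.choose b : ℂ))) else 0) := by
          intro b _
          by_cases hab : a = b
          · subst hab; simp
          · rw [if_neg hab, if_neg (Ne.symm hab), zero_mul]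
        rw [Finset.sum_congr rfl h1, Finset.sum_ite_eq', if_pos ha]
    _ = (N:ℂ) * ∑ a ∈ Finset.range (q+1),
        (q.choose a : ℂ)^2 * (z₀ * (starRingEnd ℂ) z₀)^a * (z₁ * (starRingEnd ℂ) z₁)^(q-a) := by
        rw [Finset.mul_sum]
        refine Finset.sum_congr rfl fun a _ => ?_
        rw [mul_pow z₀, mul_pow z₁]
        ring

section Bern
open Finset

lemma abs_le_one_of_sphere {s : ℕ} (v : Fin s → ℂ) (hv : ∑ i, Complex.normSq (v i) = 1)
    (i : Fin s) : ‖v i‖ ≤ 1 := by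
  have h1 : Complex.normSq (v i) ≤ 1 :=
    hv ▸ Finset.single_le_sum (fun j _ => Complex.normSq_nonneg _) (Finset.mem_univ i)
  rw [← Complex.sq_norm] at h1
  nlinarith [norm_nonneg (v i)]

lemma integrable_monomial {s : ℕ} (μ : Measure (Fin s → ℂ)) (hμ : IsUniformOnSphere μ)
    (i j : Fin s) (a b : ℕ) :
    Integrable (fun v => Complex.normSq (v i)^a * Complex.normSq (v j)^b) μ := by
  apply integrable_of_bound μ hμ _ ?_ 1
  · intro v hv
    have h1 := abs_le_one_of_sphere v hv i
    have h2 := abs_le_one_of_sphere v hv j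
    have n1 : Complex.normSq (v i) ≤ 1 := by rw [← Complex.sq_norm]; nlinarith [norm_nonneg (v i)]
    have n2 : Complex.normSq (v j) ≤ 1 := by rw [← Complex.sq_norm]; nlinarith [norm_nonneg (v j)]
    have p1 : Complex.normSq (v i)^a ≤ 1 := pow_le_one₀ (Complex.normSq_nonneg _) n1
    have p2 : Complex.normSq (v j)^b ≤ 1 := pow_le_one₀ (Complex.normSq_nonneg _) n2
    rw [_root_.abs_of_nonneg (mul_nonneg (pow_nonneg (Complex.normSq_nonneg _) a) (pow_nonneg (Complex.normSq_nonneg _) b))]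
    nlinarith [pow_nonneg (Complex.normSq_nonneg (v i)) a, pow_nonneg (Complex.normSq_nonneg (v j)) b]
  · exact ((Complex.continuous_normSq.comp (continuous_apply i)).pow a).mul
      ((Complex.continuous_normSq.comp (continuous_apply j)).pow b)

lemma bern_identity (m q : ℕ) (μ : Measure (Fin (m+2) → ℂ)) (hμ : IsUniformOnSphere μ)
    (c t : ℝ) (hct : c^2 + t^2 = 1) :
    ∑ a ∈ Finset.range (q+1), ((q.choose a : ℝ)^2 * (c^2)^a * (t^2)^(q-a)) *
      (∫ v, Complex.normSq (v 0)^a * Complex.normSq (v 1)^(q-a) ∂μ)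
    = ∫ v, Complex.normSq (v 0)^q ∂μ := by
  set N : ℕ := q + 1 with hNdef
  set ζ : ℂ := Complex.exp (2*Real.pi*Complex.I/N) with hζdef
  have hN : 0 < N := Nat.succ_pos q
  have hre : (2*(Real.pi:ℂ)*Complex.I/N) = ((2*Real.pi/N : ℝ):ℂ) * Complex.I := by
    push_cast; ring
  have habs : ζ * (starRingEnd ℂ) ζ = 1 := by
    rw [Complex.mul_conj]
    norm_cast
    rw [Complex.normSq_eq_norm_sq, hζdef, hre, Complex.norm_exp_ofReal_mul_I]
    norm_num
  have hωj : ∀ j : ℕ, ζ^j * (starRingEnd ℂ) (ζ^j) = 1 := by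
    intro j
    rw [map_pow, ← mul_pow, habs, one_pow]
  have habsζj : ∀ j : ℕ, ‖ζ^j‖ = 1 := by
    intro j
    have := hωj j
    rw [Complex.mul_conj] at this
    have h2 : Complex.normSq (ζ^j) = 1 := by exact_mod_cast this
    rw [← Complex.sq_norm] at h2
    nlinarith [norm_nonneg (ζ^j)]
  -- invariance per j
  have hinv : ∀ j : ℕ, ∫ v, Complex.normSq ((c:ℂ) * v 0 + (t:ℂ) * ζ^j * v 1)^q ∂μ
      = ∫ v, Complex.normSq (v 0)^q ∂μ := by
    intro j
    have hU := rotMat_mem m c t (ζ^j) hct (hωj j)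
    have h2 := integral_unitary μ hμ hU (fun v => Complex.normSq (v 0)^q)
      ((Complex.continuous_normSq.comp (continuous_apply 0)).pow q)
    rw [← h2]
    apply integral_congr_ae
    apply Filter.Eventually.of_forall
    intro v
    simp only []
    rw [rotMat_mulVec_zero]
  -- integrability of each rotated integrand
  have hint_rot : ∀ j : ℕ,
      Integrable (fun v => Complex.normSq ((c:ℂ) * v 0 + (t:ℂ) * ζ^j * v 1)^q) μ := by
    intro j
    apply integrable_of_bound μ hμ _ ?_ (((|c|+|t|)^2)^q)
    · intro v hv
      have h0 := abs_le_one_of_sphere v hv 0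
      have h1 := abs_le_one_of_sphere v hv 1
      have habs2 : ‖(c:ℂ) * v 0 + (t:ℂ) * ζ^j * v 1‖ ≤ |c| + |t| := by
        calc ‖(c:ℂ) * v 0 + (t:ℂ) * ζ^j * v 1‖
            ≤ ‖(c:ℂ) * v 0‖ + ‖(t:ℂ) * ζ^j * v 1‖ := norm_add_le _ _
          _ = |c| * ‖v 0‖ + |t| * (‖ζ^j‖ * ‖v 1‖) := by
              simp [norm_mul, Complex.norm_real, Real.norm_eq_abs, mul_assoc]
          _ ≤ |c| + |t| := by
              have e1 : |c| * ‖v 0‖ ≤ |c| := by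
                nlinarith [abs_nonneg c, norm_nonneg (v 0)]
              have e2 : |t| * (‖ζ^j‖ * ‖v 1‖) ≤ |t| := by
                rw [habsζj j, one_mul]
                nlinarith [abs_nonneg t, norm_nonneg (v 1)]
              linarith
      have hnsq : Complex.normSq ((c:ℂ) * v 0 + (t:ℂ) * ζ^j * v 1) ≤ (|c|+|t|)^2 := by
        rw [← Complex.sq_norm]
        have := norm_nonneg ((c:ℂ) * v 0 + (t:ℂ) * ζ^j * v 1)
        nlinarith
      rw [_root_.abs_of_nonneg (pow_nonneg (Complex.normSq_nonneg _) q)]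
      exact pow_le_pow_left₀ (Complex.normSq_nonneg _) hnsq q
    · exact (Complex.continuous_normSq.comp (by continuity)).pow q
  -- pointwise identity
  have hpt : ∀ v : Fin (m+2) → ℂ,
      ∑ j ∈ Finset.range N, Complex.normSq ((c:ℂ) * v 0 + (t:ℂ) * ζ^j * v 1)^q
      = (N:ℝ) * ∑ a ∈ Finset.range (q+1), ((q.choose a : ℝ)^2 * (c^2)^a * (t^2)^(q-a)) *
          (Complex.normSq (v 0)^a * Complex.normSq (v 1)^(q-a)) := by
    intro v
    have h := roots_avg q N (Nat.lt_succ_self q) ((c:ℂ) * v 0) ((t:ℂ) * v 1)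
    have hrw : ∀ j : ℕ, (c:ℂ) * v 0 + ζ^j * ((t:ℂ) * v 1) = (c:ℂ) * v 0 + (t:ℂ) * ζ^j * v 1 := by
      intro j; ring
    simp only [← hζdef, hrw] at h
    simp only [Complex.mul_conj] at h
    have h' : ∑ j ∈ Finset.range N, Complex.normSq ((c:ℂ) * v 0 + (t:ℂ) * ζ^j * v 1)^q
        = (N:ℝ) * ∑ a ∈ Finset.range (q+1), (q.choose a : ℝ)^2 *
            Complex.normSq ((c:ℂ) * v 0)^a * Complex.normSq ((t:ℂ) * v 1)^(q-a) := by
      exact_mod_cast h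
    rw [h']
    congr 1
    refine Finset.sum_congr rfl fun a ha => ?_
    rw [Complex.normSq_mul, Complex.normSq_ofReal, Complex.normSq_mul, Complex.normSq_ofReal]
    ring
  -- integrate
  have hL : ∫ v, (∑ j ∈ Finset.range N, Complex.normSq ((c:ℂ) * v 0 + (t:ℂ) * ζ^j * v 1)^q) ∂μ
      = (N:ℝ) * ∫ v, Complex.normSq (v 0)^q ∂μ := by
    rw [integral_finset_sum _ (fun j _ => hint_rot j)]
    rw [Finset.sum_congr rfl (fun j _ => hinv j)]
    simp [Finset.sum_const]
  have hR : ∫ v, ((N:ℝ) * ∑ a ∈ Finset.range (q+1), ((q.choose a : ℝ)^2 * (c^2)^a * (t^2)^(q-a)) *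
          (Complex.normSq (v 0)^a * Complex.normSq (v 1)^(q-a))) ∂μ
      = (N:ℝ) * ∑ a ∈ Finset.range (q+1), ((q.choose a : ℝ)^2 * (c^2)^a * (t^2)^(q-a)) *
          (∫ v, Complex.normSq (v 0)^a * Complex.normSq (v 1)^(q-a) ∂μ) := by
    rw [integral_const_mul]
    congr 1
    rw [integral_finset_sum _ (fun a _ => (integrable_monomial μ hμ 0 1 a (q-a)).const_mul _)]
    exact Finset.sum_congr rfl fun a _ => integral_const_mul _ _
  have hLR : ∫ v, (∑ j ∈ Finset.range N, Complex.normSq ((c:ℂ) * v 0 + (t:ℂ) * ζ^j * v 1)^q) ∂μ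
      = ∫ v, ((N:ℝ) * ∑ a ∈ Finset.range (q+1), ((q.choose a : ℝ)^2 * (c^2)^a * (t^2)^(q-a)) *
          (Complex.normSq (v 0)^a * Complex.normSq (v 1)^(q-a))) ∂μ :=
    integral_congr_ae (Filter.Eventually.of_forall fun v => hpt v)
  have hN' : (N:ℝ) ≠ 0 := Nat.cast_ne_zero.mpr hN.ne'
  have := hL.symm.trans (hLR.trans hR)
  exact mul_left_cancel₀ hN' this.symm |>.symm
    |>.symm

end Bern

section Key
open Finset

lemma key_ineq (m r : ℕ) (μ : Measure (Fin (m+2) → ℂ)) (hμ : IsUniformOnSphere μ) :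
    (∫ v, Complex.normSq (v 0)^(r+1) ∂μ)
      ≤ (r+1 : ℝ) * ∫ v, Complex.normSq (v 0)^r * Complex.normSq (v 1) ∂μ := by
  have : IsProbabilityMeasure μ := hμ.1
  set q : ℕ := r + 1 with hq
  set mom : ℝ := ∫ v, Complex.normSq (v 0)^q ∂μ with hmom
  set K : ℝ := ∫ v, Complex.normSq (v 0)^r * Complex.normSq (v 1) ∂μ with hKdef
  set M : ℕ → ℝ := fun a => ∫ v, Complex.normSq (v 0)^a * Complex.normSq (v 1)^(q-a) ∂μ with hM
  have hM_nonneg : ∀ a, 0 ≤ M a := fun a => integral_nonneg (fun v =>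
    mul_nonneg (pow_nonneg (Complex.normSq_nonneg _) _) (pow_nonneg (Complex.normSq_nonneg _) _))
  have hmom_nonneg : 0 ≤ mom :=
    integral_nonneg (fun v => pow_nonneg (Complex.normSq_nonneg _) _)
  have hM_le_one : ∀ a, M a ≤ 1 := by
    intro a
    have h1 : (∫ _v : Fin (m+2) → ℂ, (1:ℝ) ∂μ) = 1 := by simp
    rw [hM, ← h1]
    apply integral_mono_of_nonneg
    · exact Filter.Eventually.of_forall fun v =>
        mul_nonneg (pow_nonneg (Complex.normSq_nonneg _) _) (pow_nonneg (Complex.normSq_nonneg _) _)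
    · exact integrable_const 1
    · filter_upwards [ae_sphere μ hμ] with v hv
      have n1 : Complex.normSq (v 0) ≤ 1 := by
        have := abs_le_one_of_sphere v hv 0
        rw [← Complex.sq_norm]; nlinarith [norm_nonneg (v 0)]
      have n2 : Complex.normSq (v 1) ≤ 1 := by
        have := abs_le_one_of_sphere v hv 1
        rw [← Complex.sq_norm]; nlinarith [norm_nonneg (v 1)]
      have p1 : Complex.normSq (v 0)^a ≤ 1 := pow_le_one₀ (Complex.normSq_nonneg _) n1
      have p2 : Complex.normSq (v 1)^(q-a) ≤ 1 := pow_le_one₀ (Complex.normSq_nonneg _) n2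
      have := mul_le_one₀ p1 (pow_nonneg (Complex.normSq_nonneg _) _) p2
      simpa using this
  have hMq : M q = mom := by
    show (∫ v, Complex.normSq (v 0)^q * Complex.normSq (v 1)^(q-q) ∂μ) = mom
    simp only [Nat.sub_self, pow_zero, mul_one, hmom]
  have hMr : M r = K := by
    show (∫ v, Complex.normSq (v 0)^r * Complex.normSq (v 1)^(q-r) ∂μ) = K
    have hqr : q - r = 1 := by omega
    simp only [hqr, pow_one, hKdef]
  set B : ℝ := ∑ a ∈ Finset.range r, ((q.choose a : ℝ))^2 with hB
  have hBnn : 0 ≤ B := Finset.sum_nonneg fun a _ => sq_nonneg _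
  have main : ∀ x : ℝ, x ∈ Set.Ioo (0:ℝ) 1 →
      mom * (q:ℝ) * x^r ≤ (q:ℝ)^2 * x^r * K + (1-x) * B := by
    intro x hx
    obtain ⟨hx0, hx1⟩ := hx
    have h1x : (0:ℝ) < 1 - x := by linarith
    have hcs : (Real.sqrt x)^2 + (Real.sqrt (1-x))^2 = 1 := by
      rw [Real.sq_sqrt hx0.le, Real.sq_sqrt h1x.le]; ring
    have hid := bern_identity m q μ hμ (Real.sqrt x) (Real.sqrt (1-x)) hcs
    rw [Real.sq_sqrt hx0.le, Real.sq_sqrt h1x.le] at hid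
    rw [Finset.sum_range_succ, Finset.sum_range_succ] at hid
    have e1 : ((q.choose q : ℝ))^2 * x^q * (1-x)^(q-q) *
        (∫ v, Complex.normSq (v 0)^q * Complex.normSq (v 1)^(q-q) ∂μ) = x^q * mom := by
      simp only [Nat.choose_self, Nat.sub_self, pow_zero, mul_one, Nat.cast_one, one_pow, one_mul, hmom]
    have e2 : ((q.choose r : ℝ))^2 * x^r * (1-x)^(q-r) *
        (∫ v, Complex.normSq (v 0)^r * Complex.normSq (v 1)^(q-r) ∂μ)
        = (q:ℝ)^2 * x^r * (1-x) * K := by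
      have hqr : q - r = 1 := by omega
      have hch : q.choose r = q := by rw [hq]; exact Nat.choose_succ_self_right r
      simp only [hch, hqr, pow_one, hKdef]
    rw [e1, e2] at hid
    -- bound the remaining sum
    have hS_le : ∑ a ∈ Finset.range r, ((q.choose a : ℝ)^2 * x^a * (1-x)^(q-a)) *
        (∫ v, Complex.normSq (v 0)^a * Complex.normSq (v 1)^(q-a) ∂μ) ≤ (1-x)^2 * B := by
      have : ∀ a ∈ Finset.range r, ((q.choose a : ℝ)^2 * x^a * (1-x)^(q-a)) *
          (∫ v, Complex.normSq (v 0)^a * Complex.normSq (v 1)^(q-a) ∂μ)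
          ≤ (q.choose a : ℝ)^2 * (1-x)^2 := by
        intro a ha
        rw [Finset.mem_range] at ha
        have t1 : x^a ≤ 1 := pow_le_one₀ hx0.le hx1.le
        have t2 : (1-x)^(q-a) ≤ (1-x)^2 := pow_le_pow_of_le_one h1x.le (by linarith) (by omega)
        have t3 : (∫ v, Complex.normSq (v 0)^a * Complex.normSq (v 1)^(q-a) ∂μ) ≤ 1 := hM_le_one a
        have t4 : (0:ℝ) ≤ ∫ v, Complex.normSq (v 0)^a * Complex.normSq (v 1)^(q-a) ∂μ := hM_nonneg a
        calc ((q.choose a : ℝ)^2 * x^a * (1-x)^(q-a)) *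
            (∫ v, Complex.normSq (v 0)^a * Complex.normSq (v 1)^(q-a) ∂μ)
            ≤ ((q.choose a : ℝ)^2 * 1 * (1-x)^2) * 1 := by
              gcongr <;> first | exact sq_nonneg _ | positivity
          _ = (q.choose a : ℝ)^2 * (1-x)^2 := by ring
      calc ∑ a ∈ Finset.range r, ((q.choose a : ℝ)^2 * x^a * (1-x)^(q-a)) *
          (∫ v, Complex.normSq (v 0)^a * Complex.normSq (v 1)^(q-a) ∂μ)
          ≤ ∑ a ∈ Finset.range r, (q.choose a : ℝ)^2 * (1-x)^2 := Finset.sum_le_sum this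
        _ = (1-x)^2 * B := by rw [hB, ← Finset.sum_mul]; ring
    -- geometric bound
    have hgeo : (q:ℝ) * x^r * (1-x) ≤ 1 - x^q := by
      have hid2 : 1 - x^q = (∑ i ∈ Finset.range q, x^i) * (1-x) := by
        have := geom_sum_mul x q
        nlinarith [this]
      have hsum : (q:ℝ) * x^r ≤ ∑ i ∈ Finset.range q, x^i := by
        have : ∀ i ∈ Finset.range q, x^r ≤ x^i := by
          intro i hi
          rw [Finset.mem_range] at hi
          exact pow_le_pow_of_le_one hx0.le hx1.le (by omega)
        calc (q:ℝ) * x^r = ∑ _i ∈ Finset.range q, x^r := by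
              rw [Finset.sum_const, Finset.card_range, nsmul_eq_mul]
          _ ≤ ∑ i ∈ Finset.range q, x^i := Finset.sum_le_sum this
      rw [hid2]
      exact mul_le_mul_of_nonneg_right hsum h1x.le
    -- combine
    have hida : mom * (1 - x^q) = (∑ a ∈ Finset.range r, ((q.choose a : ℝ)^2 * x^a * (1-x)^(q-a)) *
        (∫ v, Complex.normSq (v 0)^a * Complex.normSq (v 1)^(q-a) ∂μ)) + (q:ℝ)^2 * x^r * (1-x) * K := by
      linarith [hid]
    have step1 : mom * ((q:ℝ) * x^r * (1-x)) ≤ mom * (1 - x^q) :=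
      mul_le_mul_of_nonneg_left hgeo hmom_nonneg
    have step2 : mom * (1 - x^q) ≤ (1-x)^2 * B + (q:ℝ)^2 * x^r * (1-x) * K := by
      rw [hida]; linarith [hS_le]
    have step3 : (mom * ((q:ℝ) * x^r)) * (1-x) ≤ ((q:ℝ)^2 * x^r * K + (1-x) * B) * (1-x) := by
      nlinarith [step1, step2]
    have := le_of_mul_le_mul_right step3 h1x
    linarith [this]
  -- limit x → 1⁻
  have hlim1 : Filter.Tendsto (fun x : ℝ => mom * (q:ℝ) * x^r)
      (nhdsWithin 1 (Set.Iio 1)) (nhds (mom * (q:ℝ))) := by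
    have hc : Continuous fun x : ℝ => mom * (q:ℝ) * x^r := continuous_const.mul (continuous_pow r)
    have h := hc.tendsto 1
    simp only [one_pow, mul_one] at h
    exact h.mono_left nhdsWithin_le_nhds
  have hlim2 : Filter.Tendsto (fun x : ℝ => (q:ℝ)^2 * x^r * K + (1-x) * B)
      (nhdsWithin 1 (Set.Iio 1)) (nhds ((q:ℝ)^2 * K)) := by
    have hc : Continuous fun x : ℝ => (q:ℝ)^2 * x^r * K + (1-x) * B :=
      ((continuous_const.mul (continuous_pow r)).mul continuous_const).add
        ((continuous_const.sub continuous_id).mul continuous_const)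
    have h := hc.tendsto 1
    simp only [one_pow, mul_one, sub_self, zero_mul, add_zero] at h
    exact h.mono_left nhdsWithin_le_nhds
  have hev : ∀ᶠ x in nhdsWithin (1:ℝ) (Set.Iio 1),
      mom * (q:ℝ) * x^r ≤ (q:ℝ)^2 * x^r * K + (1-x) * B := by
    filter_upwards [Ioo_mem_nhdsLT_of_mem (show (1:ℝ) ∈ Set.Ioc 0 1 by norm_num)] with x hx
    exact main x hx
  have hfinal : mom * (q:ℝ) ≤ (q:ℝ)^2 * K := le_of_tendsto_of_tendsto hlim1 hlim2 hev
  have hq0 : (0:ℝ) < (q:ℝ) := by positivity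
  have : mom ≤ (q:ℝ) * K := by
    have h2 : (q:ℝ) * mom ≤ (q:ℝ) * ((q:ℝ) * K) := by nlinarith [hfinal]
    exact le_of_mul_le_mul_left h2 hq0
  calc (∫ v, Complex.normSq (v 0)^(r+1) ∂μ) = mom := rfl
    _ ≤ (q:ℝ) * K := this
    _ = (r+1:ℝ) * K := by push_cast [hq]; ring

end Key

section Mom
open Finset

lemma integral_coord_pow {s : ℕ} (μ : Measure (Fin s → ℂ)) (hμ : IsUniformOnSphere μ)
    (p : ℕ) (i j : Fin s) :
    ∫ v, Complex.normSq (v i)^p ∂μ = ∫ v, Complex.normSq (v j)^p ∂μ := by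
  have h := integral_coord μ hμ (Equiv.swap i j) (fun v => Complex.normSq (v j)^p)
    ((Complex.continuous_normSq.comp (continuous_apply j)).pow p)
  rw [← h]
  apply integral_congr_ae
  apply Filter.Eventually.of_forall
  intro v
  simp only [Equiv.symm_swap, Equiv.swap_apply_right]

lemma integrable_nsq_pow {s : ℕ} (μ : Measure (Fin s → ℂ)) (hμ : IsUniformOnSphere μ)
    (i : Fin s) (a : ℕ) : Integrable (fun v => Complex.normSq (v i)^a) μ := by
  have := integrable_monomial μ hμ i i a 0
  simpa using this

lemma integral_two_coord {m : ℕ} (μ : Measure (Fin (m+2) → ℂ)) (hμ : IsUniformOnSphere μ)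
    (p : ℕ) (i : Fin (m+2)) (hi : i ≠ 0) :
    ∫ v, Complex.normSq (v 0)^p * Complex.normSq (v i) ∂μ
      = ∫ v, Complex.normSq (v 0)^p * Complex.normSq (v 1) ∂μ := by
  have h01 : (0 : Fin (m+2)) ≠ 1 := by simp [Fin.ext_iff]
  have h := integral_coord μ hμ (Equiv.swap 1 i)
    (fun v => Complex.normSq (v 0)^p * Complex.normSq (v 1))
    (((Complex.continuous_normSq.comp (continuous_apply 0)).pow p).mul
      (Complex.continuous_normSq.comp (continuous_apply 1)))
  rw [← h]
  apply integral_congr_ae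
  apply Filter.Eventually.of_forall
  intro v
  simp only [Equiv.symm_swap]
  rw [Equiv.swap_apply_of_ne_of_ne h01 (Ne.symm hi), Equiv.swap_apply_left]

lemma mom_rec {m : ℕ} (μ : Measure (Fin (m+2) → ℂ)) (hμ : IsUniformOnSphere μ) (p : ℕ) :
    ((m:ℝ)+2+p) * ∫ v, Complex.normSq (v 0)^(p+1) ∂μ
      ≤ ((p:ℝ)+1) * ∫ v, Complex.normSq (v 0)^p ∂μ := by
  set J : ℝ := ∫ v, Complex.normSq (v 0)^(p+1) ∂μ with hJ
  set K : ℝ := ∫ v, Complex.normSq (v 0)^p * Complex.normSq (v 1) ∂μ with hK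
  have hKnn : 0 ≤ K := integral_nonneg fun v =>
    mul_nonneg (pow_nonneg (Complex.normSq_nonneg _) _) (Complex.normSq_nonneg _)
  have hJnn : 0 ≤ J := integral_nonneg fun v => pow_nonneg (Complex.normSq_nonneg _) _
  have hkey : J ≤ ((p:ℝ)+1) * K := by
    have := key_ineq m p μ hμ
    push_cast at this ⊢
    exact this
  have hsum : ∫ v, Complex.normSq (v 0)^p ∂μ = J + ((m:ℝ)+1) * K := by
    have h1 : ∫ v, Complex.normSq (v 0)^p ∂μ
        = ∫ v, ∑ i, Complex.normSq (v 0)^p * Complex.normSq (v i) ∂μ := by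
      apply integral_congr_ae
      filter_upwards [ae_sphere μ hμ] with v hv
      rw [← Finset.mul_sum, hv, mul_one]
    have h2 : ∫ v, ∑ i, Complex.normSq (v 0)^p * Complex.normSq (v i) ∂μ
        = ∑ i, ∫ v, Complex.normSq (v 0)^p * Complex.normSq (v i) ∂μ := by
      apply integral_finset_sum
      intro i _
      have := integrable_monomial μ hμ 0 i p 1
      simpa using this
    have h3 : ∑ i, ∫ v, Complex.normSq (v 0)^p * Complex.normSq (v i) ∂μ
        = (∫ v, Complex.normSq (v 0)^p * Complex.normSq (v 0) ∂μ)
          + ∑ i ∈ Finset.univ.erase 0, ∫ v, Complex.normSq (v 0)^p * Complex.normSq (v i) ∂μ :=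
      (Finset.add_sum_erase _ _ (Finset.mem_univ 0)).symm
    have h4 : (∫ v, Complex.normSq (v 0)^p * Complex.normSq (v 0) ∂μ) = J := by
      rw [hJ]
      apply integral_congr_ae
      apply Filter.Eventually.of_forall
      intro v
      exact (pow_succ (Complex.normSq (v 0)) p).symm
    have h5 : ∀ i ∈ Finset.univ.erase (0 : Fin (m+2)),
        (∫ v, Complex.normSq (v 0)^p * Complex.normSq (v i) ∂μ) = K := by
      intro i hi
      exact integral_two_coord μ hμ p i (Finset.ne_of_mem_erase hi)
    have h6 : ∑ i ∈ Finset.univ.erase (0 : Fin (m+2)),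
        (∫ v, Complex.normSq (v 0)^p * Complex.normSq (v i) ∂μ) = ((m:ℝ)+1) * K := by
      rw [Finset.sum_congr rfl h5, Finset.sum_const, Finset.card_erase_of_mem (Finset.mem_univ 0)]
      simp only [Finset.card_univ, Fintype.card_fin, nsmul_eq_mul]
      push_cast
      ring
    rw [h1, h2, h3, h4, h6]
  rw [hsum]
  nlinarith [hkey, hKnn, hJnn]

lemma mom_le_choose2 (m : ℕ) (μ : Measure (Fin (m+2) → ℂ)) (hμ : IsUniformOnSphere μ) :
    ∀ p : ℕ, (∫ v, Complex.normSq (v 0)^p ∂μ) * (((m+1+p).choose p : ℝ)) ≤ 1 := by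
  have : IsProbabilityMeasure μ := hμ.1
  intro p
  induction p with
  | zero => simp
  | succ p ih =>
    set I2 : ℝ := ∫ v, Complex.normSq (v 0)^(p+1) ∂μ with hI2
    set I1 : ℝ := ∫ v, Complex.normSq (v 0)^p ∂μ with hI1
    have hrec : ((m:ℝ)+2+p) * I2 ≤ ((p:ℝ)+1) * I1 := mom_rec μ hμ p
    have hnatc : (m+1+p+1) * ((m+1+p).choose p) = ((m+1+p+1).choose (p+1)) * (p+1) :=
      Nat.add_one_mul_choose_eq (m+1+p) p
    have hcc : ((m:ℝ)+2+p) * (((m+1+p).choose p : ℝ)) = (((m+1+(p+1)).choose (p+1) : ℝ)) * ((p:ℝ)+1) := by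
      have := congrArg (fun n : ℕ => (n : ℝ)) hnatc
      push_cast at this
      have harr : m+1+(p+1) = m+1+p+1 := by omega
      rw [harr]
      push_cast
      linarith [this]
    have hI2nn : 0 ≤ I2 := integral_nonneg fun v => pow_nonneg (Complex.normSq_nonneg _) _
    have hC1nn : (0:ℝ) ≤ (((m+1+p).choose p : ℝ)) := Nat.cast_nonneg _
    have hp1 : (0:ℝ) < (p:ℝ)+1 := by positivity
    have step : I2 * (((m+1+(p+1)).choose (p+1) : ℝ)) * ((p:ℝ)+1) ≤ 1 * ((p:ℝ)+1) := by
      have e1 : I2 * (((m+1+(p+1)).choose (p+1) : ℝ)) * ((p:ℝ)+1)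
          = (((m:ℝ)+2+p) * I2) * (((m+1+p).choose p : ℝ)) := by
        rw [mul_assoc, ← hcc]; ring
      rw [e1]
      calc (((m:ℝ)+2+p) * I2) * (((m+1+p).choose p : ℝ))
          ≤ (((p:ℝ)+1) * I1) * (((m+1+p).choose p : ℝ)) :=
            mul_le_mul_of_nonneg_right hrec hC1nn
        _ = ((p:ℝ)+1) * (I1 * (((m+1+p).choose p : ℝ))) := by ring
        _ ≤ ((p:ℝ)+1) * 1 := mul_le_mul_of_nonneg_left ih (by positivity)
        _ = 1 * ((p:ℝ)+1) := by ring
    exact le_of_mul_le_mul_right step hp1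

lemma mom_one {s : ℕ} (hs : 0 < s) (μ : Measure (Fin s → ℂ)) (hμ : IsUniformOnSphere μ)
    (i : Fin s) : ∫ v, Complex.normSq (v i) ∂μ = 1 / s := by
  have : IsProbabilityMeasure μ := hμ.1
  have hall : ∀ j : Fin s, ∫ v, Complex.normSq (v j) ∂μ = ∫ v, Complex.normSq (v i) ∂μ := by
    intro j
    have := integral_coord_pow μ hμ 1 j i
    simpa using this
  have hsum : ∑ j : Fin s, ∫ v, Complex.normSq (v j) ∂μ = 1 := by
    rw [← integral_finset_sum]
    · have h1 : ∫ v, (∑ j, Complex.normSq (v j)) ∂μ = ∫ _v : Fin s → ℂ, (1:ℝ) ∂μ := by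
        apply integral_congr_ae
        filter_upwards [ae_sphere μ hμ] with v hv
        exact hv
      rw [h1]
      simp
    · intro j _
      have := integrable_nsq_pow μ hμ j 1
      simpa using this
  rw [Finset.sum_congr rfl (fun j _ => hall j), Finset.sum_const, Finset.card_univ] at hsum
  simp only [Fintype.card_fin, nsmul_eq_mul] at hsum
  have hs' : (s:ℝ) ≠ 0 := Nat.cast_ne_zero.mpr hs.ne'
  field_simp
  linarith [hsum]

end Mom

section Main
open Finset

lemma nat_choose_bound : ∀ p s : ℕ, 1 ≤ s → 1 ≤ p → s^p ≤ (s+p-1).choose p * p^p := by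
  intro p
  induction p with
  | zero => intro s _ h; omega
  | succ p ih =>
    intro s hs _
    rcases Nat.eq_zero_or_pos p with rfl | hp
    · simpa using Nat.choose_one_right (s + 1 - 1) ▸ (by simp : s ^ 1 ≤ (s+1-1).choose 1 * 1^1)
    · have h1 : s^(p+1) = s * s^p := by ring
      have h2 : s * s^p ≤ s * ((s+p-1).choose p * p^p) :=
        Nat.mul_le_mul_left s (ih s hs hp)
      have hckey : (s+p) * ((s+p-1).choose p) = ((s+p).choose (p+1)) * (p+1) := by
        have h := Nat.add_one_mul_choose_eq (s+p-1) p
        have hsp : s+p-1+1 = s+p := by omega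
        rw [hsp] at h
        exact h
      have h3 : s * ((s+p-1).choose p * p^p) ≤ ((s+p) * ((s+p-1).choose p)) * (p+1)^p := by
        have hpow : p^p ≤ (p+1)^p := Nat.pow_le_pow_left (by omega) p
        calc s * ((s+p-1).choose p * p^p) = (s * ((s+p-1).choose p)) * p^p := by ring
          _ ≤ ((s+p) * ((s+p-1).choose p)) * (p+1)^p :=
            Nat.mul_le_mul (Nat.mul_le_mul_right _ (by omega)) hpow
      have h4 : ((s+p) * ((s+p-1).choose p)) * (p+1)^p = ((s+p).choose (p+1)) * (p+1)^(p+1) := by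
        rw [hckey]; ring
      have hidx : s + (p+1) - 1 = s + p := by omega
      rw [hidx]
      calc s^(p+1) = s * s^p := h1
        _ ≤ s * ((s+p-1).choose p * p^p) := h2
        _ ≤ ((s+p) * ((s+p-1).choose p)) * (p+1)^p := h3
        _ = ((s+p).choose (p+1)) * (p+1)^(p+1) := h4

lemma mom_bound {n : ℕ} (μ : Measure (Fin (n+1) → ℂ)) (hμ : IsUniformOnSphere μ) (p : ℕ) :
    (∫ v, Complex.normSq (v 0)^p ∂μ) * ((n+p).choose p : ℝ) ≤ 1 := by
  have : IsProbabilityMeasure μ := hμ.1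
  rcases n with _ | m
  · -- s = 1
    have h1 : (∫ v : Fin 1 → ℂ, Complex.normSq (v 0)^p ∂μ) = 1 := by
      have : ∫ v : Fin 1 → ℂ, Complex.normSq (v 0)^p ∂μ = ∫ _v : Fin 1 → ℂ, (1:ℝ) ∂μ := by
        apply integral_congr_ae
        filter_upwards [ae_sphere μ hμ] with v hv
        rw [Fin.sum_univ_one] at hv
        rw [hv, one_pow]
      rw [this]; simp
    rw [h1, Nat.zero_add, Nat.choose_self]
    norm_num
  · exact mom_le_choose2 m μ hμ p

end Main

theorem stmt5_aux (s : ℕ) (hs : 0 < s)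
    (T : Matrix (Fin s) (Fin s) ℂ) (hT : T.PosSemidef)
    (μ : Measure (Fin s → ℂ)) (hμ : IsUniformOnSphere μ) :
    (∫ v, (star v ⬝ᵥ T *ᵥ v).re ∂μ) = (T.trace).re / s ∧
    ∀ p : ℕ, 1 ≤ p →
      (∫ v, (star v ⬝ᵥ T *ᵥ v).re ^ p ∂μ) ≤
          (T.trace).re ^ p / ((s + p - 1).choose p : ℝ) ∧
      (T.trace).re ^ p / ((s + p - 1).choose p : ℝ) ≤ ((p : ℝ) * (T.trace).re / s) ^ p := by
  obtain ⟨n, rfl⟩ : ∃ n, s = n + 1 := ⟨s - 1, by omega⟩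
  have hprob : IsProbabilityMeasure μ := hμ.1
  have hH : T.IsHermitian := hT.1
  set lam : Fin (n+1) → ℝ := hH.eigenvalues with hlam
  have hlam_nonneg : ∀ i, 0 ≤ lam i := hT.eigenvalues_nonneg
  set V : Matrix (Fin (n+1)) (Fin (n+1)) ℂ := ↑hH.eigenvectorUnitary with hV
  have hVmem : star V ∈ Matrix.unitaryGroup (Fin (n+1)) ℂ := Unitary.star_mem hH.eigenvectorUnitary.2
  set F : (Fin (n+1) → ℂ) → ℝ := fun v => ∑ i, lam i * Complex.normSq (v i) with hF
  have hFcont : Continuous F :=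
    continuous_finset_sum _ fun i _ =>
      continuous_const.mul (Complex.continuous_normSq.comp (continuous_apply i))
  have hFnn : ∀ v, 0 ≤ F v := fun v =>
    Finset.sum_nonneg fun i _ => mul_nonneg (hlam_nonneg i) (Complex.normSq_nonneg _)
  -- pointwise diagonalization
  have hre : ∀ v, (star v ⬝ᵥ T *ᵥ v).re = F (star V *ᵥ v) := by
    intro v
    have hpoint : star v ⬝ᵥ T *ᵥ v
        = ∑ i, (lam i : ℂ) * (Complex.normSq ((star V *ᵥ v) i) : ℂ) := by
      conv_lhs => rw [hH.spectral_theorem, Unitary.conjStarAlgAut_apply]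
      rw [← Matrix.mulVec_mulVec, ← Matrix.mulVec_mulVec]
      rw [Matrix.dotProduct_mulVec]
      have hsw : star v ᵥ* V = star (star V *ᵥ v) := by
        rw [Matrix.star_mulVec, Matrix.star_eq_conjTranspose, Matrix.conjTranspose_conjTranspose]
      rw [← hV, hsw]
      show dotProduct _ _ = _
      rw [dotProduct]
      refine Finset.sum_congr rfl fun i _ => ?_
      rw [Matrix.mulVec_diagonal]
      rw [Pi.star_apply]
      show (starRingEnd ℂ) ((star V *ᵥ v) i) * ((lam i : ℂ) * (star V *ᵥ v) i) = _
      rw [← Complex.mul_conj]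
      ring
    rw [hpoint]
    have hc : (∑ i, (lam i : ℂ) * (Complex.normSq ((star V *ᵥ v) i) : ℂ))
        = ((F (star V *ᵥ v) : ℝ) : ℂ) := by
      rw [hF]
      push_cast
      rfl
    rw [hc, Complex.ofReal_re]
  -- trace
  have htr : (T.trace).re = ∑ i, lam i := by
    have h1 : T.trace = ∑ i, (lam i : ℂ) := by
      conv_lhs => rw [hH.spectral_theorem, Unitary.conjStarAlgAut_apply]
      rw [Matrix.trace_mul_cycle, ← hV]
      rw [show star V * V = 1 from Unitary.coe_star_mul_self hH.eigenvectorUnitary]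
      rw [one_mul, Matrix.trace_diagonal]
      rfl
    rw [h1]
    have h2 : (∑ i, (lam i : ℂ)) = ((∑ i, lam i : ℝ) : ℂ) := by push_cast; rfl
    rw [h2, Complex.ofReal_re]
  -- integral transfers
  have hint1 : ∫ v, (star v ⬝ᵥ T *ᵥ v).re ∂μ = ∫ v, F v ∂μ := by
    calc ∫ v, (star v ⬝ᵥ T *ᵥ v).re ∂μ = ∫ v, F (star V *ᵥ v) ∂μ :=
          integral_congr_ae (Filter.Eventually.of_forall fun v => hre v)
      _ = ∫ v, F v ∂μ := integral_unitary μ hμ hVmem F hFcont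
  have hintp : ∀ p : ℕ, ∫ v, (star v ⬝ᵥ T *ᵥ v).re ^ p ∂μ = ∫ v, (F v)^p ∂μ := by
    intro p
    calc ∫ v, (star v ⬝ᵥ T *ᵥ v).re ^ p ∂μ = ∫ v, (F (star V *ᵥ v))^p ∂μ :=
          integral_congr_ae (Filter.Eventually.of_forall fun v => by
            show (star v ⬝ᵥ T *ᵥ v).re ^ p = (F (star V *ᵥ v))^p
            rw [hre v])
      _ = ∫ v, (F v)^p ∂μ := integral_unitary μ hμ hVmem (fun v => (F v)^p) (hFcont.pow p)
  constructor
  · -- part 1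
    rw [hint1, htr]
    have h1 : ∫ v, F v ∂μ = ∑ i, lam i * (1/((n:ℝ)+1)) := by
      rw [hF]
      rw [integral_finset_sum _ (fun i _ => by
        have := (integrable_nsq_pow μ hμ i 1).const_mul (lam i)
        simpa using this)]
      refine Finset.sum_congr rfl fun i _ => ?_
      rw [integral_const_mul]
      have := mom_one (Nat.succ_pos n) μ hμ i
      rw [this]
      push_cast
      ring
    rw [h1]
    simp_rw [mul_one_div]
    rw [← Finset.sum_div]
    push_cast
    ring
  · -- part 2
    intro p hp
    set tr : ℝ := ∑ i, lam i with htrdef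
    have htrnn : 0 ≤ tr := Finset.sum_nonneg fun i _ => hlam_nonneg i
    have hidx : n+1+p-1 = n+p := by omega
    have hCpos : (0:ℝ) < (((n+p).choose p : ℕ) : ℝ) := by
      exact_mod_cast Nat.choose_pos (by omega : p ≤ n+p)
    constructor
    · -- first inequality
      rw [hintp p, htr, hidx]
      rcases eq_or_lt_of_le htrnn with h0 | hpos
      · -- trace zero
        have hz : ∀ i ∈ Finset.univ, lam i = 0 :=
          (Finset.sum_eq_zero_iff_of_nonneg (fun i _ => hlam_nonneg i)).mp h0.symm
        have hF0 : ∀ v, F v = 0 := fun v =>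
          Finset.sum_eq_zero fun i hi => by rw [hz i hi, zero_mul]
        have hzero : ∫ v, (F v)^p ∂μ = 0 := by
          have : ∀ v : Fin (n+1) → ℂ, (F v)^p = 0 := fun v => by
            rw [hF0 v]; exact zero_pow (by omega)
          simp only [this, integral_zero]
        rw [hzero, ← h0, zero_pow (by omega : p ≠ 0), zero_div]
      · -- trace positive
        have htr0 : tr ≠ 0 := ne_of_gt hpos
        set Ip : ℝ := ∫ v, Complex.normSq (v 0)^p ∂μ with hIp
        have hIpnn : 0 ≤ Ip := integral_nonneg fun v => pow_nonneg (Complex.normSq_nonneg _) _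
        have hw : ∑ i, lam i / tr = 1 := by
          rw [← Finset.sum_div, ← htrdef, div_self htr0]
        have hptw : ∀ v, (F v)^p ≤ tr^p * ∑ i, (lam i / tr) * (Complex.normSq (v i))^p := by
          intro v
          have hFv : F v = tr * ∑ i, (lam i / tr) * Complex.normSq (v i) := by
            rw [hF, Finset.mul_sum]
            refine Finset.sum_congr rfl fun i _ => ?_
            field_simp
          have hmean := Real.pow_arith_mean_le_arith_mean_pow Finset.univ
            (fun i => lam i / tr) (fun i => Complex.normSq (v i))
            (fun i _ => div_nonneg (hlam_nonneg i) htrnn) hw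
            (fun i _ => Complex.normSq_nonneg _) p
          calc (F v)^p = tr^p * (∑ i, (lam i / tr) * Complex.normSq (v i))^p := by
                rw [hFv, mul_pow]
            _ ≤ tr^p * ∑ i, (lam i / tr) * (Complex.normSq (v i))^p :=
                mul_le_mul_of_nonneg_left hmean (pow_nonneg htrnn p)
        have hg_int : Integrable (fun v => tr^p * ∑ i, (lam i / tr) * (Complex.normSq (v i))^p) μ := by
          apply Integrable.const_mul
          exact integrable_finset_sum _ fun i _ => (integrable_nsq_pow μ hμ i p).const_mul _
        have hmono : ∫ v, (F v)^p ∂μ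
            ≤ ∫ v, tr^p * ∑ i, (lam i / tr) * (Complex.normSq (v i))^p ∂μ :=
          integral_mono_of_nonneg
            (Filter.Eventually.of_forall fun v => pow_nonneg (hFnn v) p)
            hg_int (Filter.Eventually.of_forall fun v => hptw v)
        have hgval : ∫ v, tr^p * ∑ i, (lam i / tr) * (Complex.normSq (v i))^p ∂μ
            = tr^p * Ip := by
          rw [integral_const_mul]
          congr 1
          rw [integral_finset_sum _ (fun i _ => (integrable_nsq_pow μ hμ i p).const_mul _)]
          have : ∀ i ∈ Finset.univ, (∫ v, (lam i / tr) * (Complex.normSq (v i))^p ∂μ)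
              = (lam i / tr) * Ip := by
            intro i _
            rw [integral_const_mul, hIp, integral_coord_pow μ hμ p i 0]
          rw [Finset.sum_congr rfl this, ← Finset.sum_mul, hw, one_mul]
        have hmb : Ip * (((n+p).choose p : ℕ) : ℝ) ≤ 1 := mom_bound μ hμ p
        have hIp_le : Ip ≤ 1 / (((n+p).choose p : ℕ) : ℝ) := by
          rw [le_div_iff₀ hCpos]
          exact hmb
        calc ∫ v, (F v)^p ∂μ ≤ tr^p * Ip := hmono.trans (le_of_eq hgval)
          _ ≤ tr^p * (1 / (((n+p).choose p : ℕ) : ℝ)) :=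
              mul_le_mul_of_nonneg_left hIp_le (pow_nonneg htrnn p)
          _ = tr^p / (((n+p).choose p : ℕ) : ℝ) := by ring
    · -- second inequality
      rw [htr, hidx]
      have hnat := nat_choose_bound p (n+1) (by omega) hp
      rw [hidx] at hnat
      have hcast : ((n:ℝ)+1)^p ≤ (((n+p).choose p : ℕ) : ℝ) * (p:ℝ)^p := by
        exact_mod_cast hnat
      have hspos : (0:ℝ) < ((n:ℝ)+1)^p := by positivity
      rw [div_le_iff₀ hCpos]
      have hexp : ((p:ℝ) * tr / ((n:ℕ)+1 : ℝ))^p = (p:ℝ)^p * tr^p / ((n:ℝ)+1)^p := by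
        push_cast
        rw [div_pow, mul_pow]
      rw [show (((n:ℕ)+1 : ℕ) : ℝ) = (n:ℝ)+1 from by push_cast; ring] at *
      rw [hexp]
      rw [div_mul_eq_mul_div, le_div_iff₀ hspos]
      have h1 : tr^p * ((n:ℝ)+1)^p ≤ tr^p * ((((n+p).choose p : ℕ) : ℝ) * (p:ℝ)^p) :=
        mul_le_mul_of_nonneg_left hcast (pow_nonneg htrnn p)
      nlinarith [h1]

end AuxStmt5

/-- moments of `⟨φ, Tφ⟩` for `φ` Haar-uniform on the unit sphere of `ℂ^s`. -/
theorem stmt5 (s : ℕ) (hs : 0 < s)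
    (T : Matrix (Fin s) (Fin s) ℂ) (hT : T.PosSemidef)
    (μ : Measure (Fin s → ℂ)) (hμ : IsUniformOnSphere μ) :
    (∫ v, (star v ⬝ᵥ T *ᵥ v).re ∂μ) = (T.trace).re / s ∧
    ∀ p : ℕ, 1 ≤ p →
      (∫ v, (star v ⬝ᵥ T *ᵥ v).re ^ p ∂μ) ≤
          (T.trace).re ^ p / ((s + p - 1).choose p : ℝ) ∧
      (T.trace).re ^ p / ((s + p - 1).choose p : ℝ) ≤ ((p : ℝ) * (T.trace).re / s) ^ p :=
  stmt5_aux s hs T hT μ hμ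

end
end

section
/- Let A, B be finite-dimensional complex Hilbert spaces with |A| ≥ |B|. Let (x_i)_{i=1}^{|A|} be an orthonormal basis of A, let (e_j)_{j=1}^{|B|} be an orthonormal basis of B, and for 1 ≤ i ≤ |A| set ψ_i = (1/√|B|)·Σ_{j=1}^{|B|} e^{2πi ji/|A|} e_j. Define the classical-quantum channel N : L(A) → L(B) by N(X) = Σ_{i=1}^{|A|} ⟨x_i| X |x_i⟩ |ψ_i⟩⟨ψ_i|. Then N is a CPTP map with Kraus rank at most |A|, and for every 0 < ε < 1/2, every completely positive map N̂ : L(A) → L(B) satisfying (1−ε)N(R) − ε·(tr R)·1_B/|B| ≤ N̂(R) ≤ (1+ε)N(R) + ε·(tr R)·1_B/|B| (Loewner order) for all positive semidefinite R on A has Kraus rank at least |A|. -/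
open scoped Kronecker ENNReal ComplexOrder
open Matrix MeasureTheory

noncomputable section
attribute [local instance] Classical.propDecidable

/-- The classical-quantum channel `N(X) = ∑_i ⟨x_i|X|x_i⟩ |ψ_i⟩⟨ψ_i|`. -/
def cqChan (a b : ℕ) (x : Fin a → (Fin a → ℂ)) (ψ : Fin a → (Fin b → ℂ)) :
    Matrix (Fin a) (Fin a) ℂ → Matrix (Fin b) (Fin b) ℂ :=
  fun X => ∑ i, (star (x i) ⬝ᵥ X *ᵥ x i) • projVec (ψ i)


/-- Auxiliary: quadratic form of a rank-one projection. -/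
lemma aux_quadForm_projVec {n : Type*} [Fintype n] (v w : n → ℂ) :
    star w ⬝ᵥ (projVec v) *ᵥ w = (star w ⬝ᵥ v) * star (star w ⬝ᵥ v) := by
  simp only [projVec, dotProduct, mulVec, Pi.star_apply, Matrix.of_apply,
    Finset.sum_mul, Finset.mul_sum, star_sum, star_mul', star_star]
  rw [Finset.sum_comm]
  apply Finset.sum_congr rfl; intros; apply Finset.sum_congr rfl; intros; ring

/-- Auxiliary: rank-one projections are PSD. -/
lemma aux_projVec_posSemidef {n : Type*} [Fintype n] (v : n → ℂ) :
    (projVec v).PosSemidef := by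
  rw [Matrix.posSemidef_iff_dotProduct_mulVec]
  constructor
  · ext i j
    simp [projVec, Matrix.conjTranspose_apply, mul_comm]
  · intro y
    rw [aux_quadForm_projVec]
    exact mul_star_self_nonneg _

/-- Auxiliary: conjugation of a rank-one projection. -/
lemma aux_conj_outer {n m : Type*} [Fintype n] [Fintype m] (K : Matrix m n ℂ) (u : n → ℂ) :
    K * projVec u * Kᴴ = projVec (K *ᵥ u) := by
  ext p q
  simp only [projVec, Matrix.mul_apply, Matrix.conjTranspose_apply, mulVec, dotProduct,
    Matrix.of_apply, Finset.sum_mul, Finset.mul_sum, star_sum, star_mul', star_star]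
  apply Finset.sum_congr rfl; intros; apply Finset.sum_congr rfl; intros; ring

/-- Auxiliary: action of the rank-one Kraus operator `|v⟩⟨y|`. -/
lemma aux_outer_action {n m : Type*} [Fintype n] [Fintype m] (v : m → ℂ) (y : n → ℂ)
    (X : Matrix n n ℂ) :
    (Matrix.of fun r c => v r * star (y c)) * X * (Matrix.of fun r c => v r * star (y c))ᴴ
      = (star y ⬝ᵥ X *ᵥ y) • projVec v := by
  ext r t
  simp only [projVec, Matrix.mul_apply, Matrix.conjTranspose_apply, mulVec, dotProduct,
    Matrix.of_apply, Matrix.smul_apply, smul_eq_mul, Finset.sum_mul, Finset.mul_sum,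
    star_mul', Pi.star_apply, star_star]
  rw [Finset.sum_comm]
  apply Finset.sum_congr rfl; intros; apply Finset.sum_congr rfl; intros; ring

/-- Auxiliary: completeness of an orthonormal family of `|A|` vectors in `ℂ^{|A|}`. -/
lemma aux_sum_quadForm_eq_trace {a : ℕ} (x : Fin a → (Fin a → ℂ))
    (hx : ∀ i j, star (x i) ⬝ᵥ x j = if i = j then 1 else 0)
    (X : Matrix (Fin a) (Fin a) ℂ) :
    ∑ i, star (x i) ⬝ᵥ X *ᵥ x i = X.trace := by
  classical
  set G : Matrix (Fin a) (Fin a) ℂ := Matrix.of fun t i => x i t with hG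
  have h1 : Gᴴ * G = 1 := by
    ext i j
    have := hx i j
    simpa [hG, Matrix.mul_apply, Matrix.conjTranspose_apply, dotProduct,
      Matrix.one_apply] using this
  have h2 : G * Gᴴ = 1 := mul_eq_one_comm.mp h1
  have key : ∑ i, star (x i) ⬝ᵥ X *ᵥ x i = (Gᴴ * X * G).trace := by
    simp only [Matrix.trace, Matrix.diag, Matrix.mul_apply, hG, dotProduct, mulVec,
      Matrix.conjTranspose_apply, Matrix.of_apply, Pi.star_apply, Finset.mul_sum,
      Finset.sum_mul]
    apply Finset.sum_congr rfl; intros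
    rw [Finset.sum_comm]
    apply Finset.sum_congr rfl; intros
    apply Finset.sum_congr rfl; intros
    ring
  rw [key, Matrix.trace_mul_cycle, h2, Matrix.one_mul]

/-- Auxiliary: expansion of a dot product in an orthonormal family. -/
lemma aux_dot_expand {b : ℕ} (e : Fin b → Fin b → ℂ)
    (he : ∀ i j, star (e i) ⬝ᵥ e j = if i = j then 1 else 0)
    (d d' : Fin b → ℂ) :
    star (fun t => ∑ j, d j * e j t) ⬝ᵥ (fun t => ∑ j, d' j * e j t)
      = ∑ j, star (d j) * d' j := by
  have step : (star (fun t => ∑ j, d j * e j t) ⬝ᵥ (fun t => ∑ j, d' j * e j t))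
      = ∑ j', ∑ j, star (d j) * d' j' * (star (e j) ⬝ᵥ e j') := by
    simp only [dotProduct, Pi.star_apply, star_sum, star_mul', Finset.sum_mul,
      Finset.mul_sum]
    rw [Finset.sum_comm]
    apply Finset.sum_congr rfl; intros
    rw [Finset.sum_comm]
    apply Finset.sum_congr rfl; intros
    apply Finset.sum_congr rfl; intros
    ring
  rw [step]
  simp [he, mul_ite, Finset.sum_ite_eq']

/-- Auxiliary: dot product of a basis vector with an expansion. -/
lemma aux_dot_single {b : ℕ} (e : Fin b → Fin b → ℂ)
    (he : ∀ i j, star (e i) ⬝ᵥ e j = if i = j then 1 else 0)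
    (d : Fin b → ℂ) (j₀ : Fin b) :
    star (e j₀) ⬝ᵥ (fun t => ∑ j, d j * e j t) = d j₀ := by
  have step : star (e j₀) ⬝ᵥ (fun t => ∑ j, d j * e j t)
      = ∑ j, d j * (star (e j₀) ⬝ᵥ e j) := by
    simp only [dotProduct, Pi.star_apply, Finset.mul_sum]
    rw [Finset.sum_comm]
    apply Finset.sum_congr rfl; intros
    apply Finset.sum_congr rfl; intros
    ring
  rw [step]
  simp [he, mul_ite, Finset.sum_ite_eq']

/-- Auxiliary: a sum of matrices acting on a vector. -/
lemma aux_sum_mulVec {ι m n : Type*} [Fintype n] (s : Finset ι)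
    (M : ι → Matrix m n ℂ) (w : n → ℂ) :
    (∑ l ∈ s, M l) *ᵥ w = ∑ l ∈ s, M l *ᵥ w := by
  ext p
  simp only [mulVec, dotProduct, Finset.sum_apply, Matrix.sum_apply, Finset.sum_mul]
  rw [Finset.sum_comm]

/-- Auxiliary: dot product with a sum of vectors. -/
lemma aux_dotProduct_sum {ι n : Type*} [Fintype n] (s : Finset ι)
    (v : n → ℂ) (f : ι → n → ℂ) :
    v ⬝ᵥ (∑ l ∈ s, f l) = ∑ l ∈ s, v ⬝ᵥ f l := by
  simp only [dotProduct, Finset.sum_apply, Finset.mul_sum]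
  rw [Finset.sum_comm]

/-- the classical-quantum channel built on a tight frame is CPTP with
Kraus rank at most `|A|`, and any CP map approximating it in the two-sided Loewner sense
has Kraus rank at least `|A|`. -/
theorem stmt11 (a b : ℕ) (hb : 0 < b) (hab : b ≤ a)
    (x : Fin a → (Fin a → ℂ))
    (hx : ∀ i j, star (x i) ⬝ᵥ x j = if i = j then 1 else 0)
    (e : Fin b → (Fin b → ℂ))
    (he : ∀ i j, star (e i) ⬝ᵥ e j = if i = j then 1 else 0)
    (ψ : Fin a → (Fin b → ℂ))
    (hψ : ∀ i, ψ i = fun t => ((Real.sqrt b : ℂ))⁻¹ *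
      ∑ j : Fin b, Complex.exp
        (2 * Real.pi * Complex.I * (((j.1 : ℕ) + 1) * ((i.1 : ℕ) + 1)) / a) * e j t) :
    IsCPTP (cqChan a b x ψ) ∧
    (∃ K : Fin a → Matrix (Fin b) (Fin a) ℂ, HasKraus (cqChan a b x ψ) K) ∧
    ∀ ε : ℝ, 0 < ε → ε < 1 / 2 →
      ∀ Nh : Matrix (Fin a) (Fin a) ℂ → Matrix (Fin b) (Fin b) ℂ, IsCP Nh →
        (∀ R : Matrix (Fin a) (Fin a) ℂ, R.PosSemidef →
          loewnerLE (((1 - ε : ℝ) : ℂ) • cqChan a b x ψ R - ((ε : ℂ) * R.trace / b) • 1)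
            (Nh R) ∧
          loewnerLE (Nh R)
            (((1 + ε : ℝ) : ℂ) • cqChan a b x ψ R + ((ε : ℂ) * R.trace / b) • 1)) →
        a ≤ krausRank Nh := by
  have ha : 0 < a := lt_of_lt_of_le hb hab
  -- the phases
  set c : Fin a → Fin b → ℂ := fun i j =>
    Complex.exp (2 * Real.pi * Complex.I * (((j.1 : ℕ) + 1) * ((i.1 : ℕ) + 1)) / a) with hc
  have hz : ∀ (i : Fin a) (j : Fin b), star (c i j) * c i j = 1 := by
    intro i j
    have hcz : (starRingEnd ℂ) (2 * Real.pi * Complex.I *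
        (((j.1 : ℕ) + 1) * ((i.1 : ℕ) + 1)) / a)
        = -(2 * Real.pi * Complex.I * (((j.1 : ℕ) + 1) * ((i.1 : ℕ) + 1)) / a) := by
      simp [map_div₀, _root_.map_mul, map_ofNat, Complex.conj_I, Complex.conj_ofReal,
        map_add, _root_.map_one, map_natCast]
      ring
    show (starRingEnd ℂ) (c i j) * c i j = 1
    rw [hc]
    simp only [← Complex.exp_conj, hcz, ← Complex.exp_add, neg_add_cancel, Complex.exp_zero]
  set d : Fin a → Fin b → ℂ := fun i j => ((Real.sqrt b : ℂ))⁻¹ * c i j with hd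
  have hψ' : ∀ i, ψ i = fun t => ∑ j, d i j * e j t := by
    intro i
    rw [hψ i]
    funext t
    rw [Finset.mul_sum]
    apply Finset.sum_congr rfl; intros; rw [hd]; ring
  have hbR : (0 : ℝ) ≤ (b : ℝ) := by positivity
  have hsq : ((Real.sqrt b : ℂ))⁻¹ * ((Real.sqrt b : ℂ))⁻¹ = ((b : ℝ) : ℂ)⁻¹ := by
    rw [← mul_inv, ← Complex.ofReal_mul, Real.mul_self_sqrt hbR]
  have hdd : ∀ i j, star (d i j) * d i j = ((b : ℝ) : ℂ)⁻¹ := by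
    intro i j
    have h1 : star (d i j) = ((Real.sqrt b : ℂ))⁻¹ * star (c i j) := by
      rw [hd]
      simp [star_mul', Complex.conj_ofReal]
    calc star (d i j) * d i j
        = (((Real.sqrt b : ℂ))⁻¹ * ((Real.sqrt b : ℂ))⁻¹) * (star (c i j) * c i j) := by
          rw [h1, hd]; ring
      _ = ((b : ℝ) : ℂ)⁻¹ := by rw [hz, hsq, mul_one]
  have hbne : ((b : ℝ) : ℂ) ≠ 0 := by
    simp only [ne_eq, Complex.ofReal_eq_zero, Nat.cast_eq_zero]
    exact hb.ne'
  have hnorm : ∀ i, star (ψ i) ⬝ᵥ ψ i = 1 := by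
    intro i
    rw [hψ' i, aux_dot_expand e he]
    simp only [hdd, Finset.sum_const, Finset.card_univ, Fintype.card_fin, nsmul_eq_mul]
    rw [show ((b : ℕ) : ℂ) = ((b : ℝ) : ℂ) by push_cast; ring]
    exact mul_inv_cancel₀ hbne
  have htr : ∀ i, (projVec (ψ i)).trace = 1 := by
    intro i
    have h1 : (projVec (ψ i)).trace = star (ψ i) ⬝ᵥ ψ i := by
      simp [projVec, Matrix.trace, Matrix.diag, dotProduct, Pi.star_apply, mul_comm]
    rw [h1, hnorm]
  have hover : ∀ (j₀ : Fin b) (i : Fin a),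
      (star (e j₀) ⬝ᵥ ψ i) * star (star (e j₀) ⬝ᵥ ψ i) = ((b : ℝ) : ℂ)⁻¹ := by
    intro j₀ i
    rw [hψ' i, aux_dot_single e he]
    rw [mul_comm]
    exact hdd i j₀
  -- Kraus decomposition with `a` operators
  set K : Fin a → Matrix (Fin b) (Fin a) ℂ :=
    fun i => Matrix.of fun r c' => ψ i r * star (x i c') with hK
  have hKr : HasKraus (cqChan a b x ψ) K := by
    intro X
    unfold cqChan
    apply Finset.sum_congr rfl
    intro i _
    rw [hK]
    exact (aux_outer_action (ψ i) (x i) X).symm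
  have hTP : IsTP (cqChan a b x ψ) := by
    intro X
    unfold cqChan
    rw [Matrix.trace_sum]
    simp only [Matrix.trace_smul, htr, smul_eq_mul, mul_one]
    exact aux_sum_quadForm_eq_trace x hx X
  refine ⟨⟨⟨a, K, hKr⟩, hTP⟩, ⟨K, hKr⟩, ?_⟩
  intro ε hε hε2 Nh hCP hLE
  have key : ∀ (s : ℕ) (Ks : Fin s → Matrix (Fin b) (Fin a) ℂ), HasKraus Nh Ks → a ≤ s := by
    intro s Ks hKs
    by_contra hlt
    push_neg at hlt
    set j₀ : Fin b := ⟨0, hb⟩ with hj₀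
    set w : Fin b → ℂ := e j₀ with hw
    set Z : Matrix (Fin s) (Fin a) ℂ :=
      Matrix.of fun l c' => ∑ p, star (w p) * Ks l p c' with hZ
    obtain ⟨u, huZ, hune⟩ : ∃ u : Fin a → ℂ, Z *ᵥ u = 0 ∧ u ≠ 0 := by
      have hk : LinearMap.ker Z.mulVecLin ≠ ⊥ := by
        apply LinearMap.ker_ne_bot_of_finrank_lt (f := Z.mulVecLin)
        simpa using hlt
      obtain ⟨u, hu1, hu2⟩ := (Submodule.ne_bot_iff _).mp hk
      exact ⟨u, hu1, hu2⟩
    set R : Matrix (Fin a) (Fin a) ℂ := projVec u with hR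
    have hRps : R.PosSemidef := aux_projVec_posSemidef u
    obtain ⟨h1, _h2⟩ := hLE R hRps
    have hq := h1.dotProduct_mulVec_nonneg w
    -- the Nh side of the quadratic form vanishes
    have hNh0 : star w ⬝ᵥ (Nh R) *ᵥ w = 0 := by
      rw [hKs R, aux_sum_mulVec, aux_dotProduct_sum]
      apply Finset.sum_eq_zero
      intro l _
      rw [hR, aux_conj_outer, aux_quadForm_projVec]
      have hzl : star w ⬝ᵥ (Ks l *ᵥ u) = (Z *ᵥ u) l := by
        simp only [hZ, mulVec, dotProduct, Pi.star_apply, Matrix.of_apply,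
          Finset.mul_sum, Finset.sum_mul]
        rw [Finset.sum_comm]
        apply Finset.sum_congr rfl; intros
        apply Finset.sum_congr rfl; intros
        ring
      rw [hzl, huZ]
      simp
    -- the quadratic form of the cq channel
    have hNR : star w ⬝ᵥ (cqChan a b x ψ R) *ᵥ w = ((b : ℝ) : ℂ)⁻¹ * R.trace := by
      unfold cqChan
      rw [aux_sum_mulVec, aux_dotProduct_sum]
      have hterm : ∀ i : Fin a, star w ⬝ᵥ ((star (x i) ⬝ᵥ R *ᵥ x i) • projVec (ψ i)) *ᵥ w
          = (star (x i) ⬝ᵥ R *ᵥ x i) * ((b : ℝ) : ℂ)⁻¹ := by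
        intro i
        rw [Matrix.smul_mulVec, dotProduct_smul, smul_eq_mul,
          aux_quadForm_projVec (ψ i) w, hw, hover j₀ i]
      rw [Finset.sum_congr rfl (fun i _ => hterm i), ← Finset.sum_mul,
        aux_sum_quadForm_eq_trace x hx R, mul_comm]
    have hww : star w ⬝ᵥ w = 1 := by
      have := he j₀ j₀
      simpa [hw] using this
    -- the trace of R is a positive real
    set S : ℝ := ∑ p, Complex.normSq (u p) with hS
    have hRtr : R.trace = ((S : ℝ) : ℂ) := by
      rw [hR, hS]
      simp only [projVec, Matrix.trace, Matrix.diag, Matrix.of_apply]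
      push_cast
      apply Finset.sum_congr rfl
      intros p _
      rw [← Complex.mul_conj]
      rfl
    have hSpos : 0 < S := by
      obtain ⟨p, hp⟩ := Function.ne_iff.mp hune
      have : 0 < Complex.normSq (u p) := Complex.normSq_pos.mpr hp
      exact Finset.sum_pos' (fun q _ => Complex.normSq_nonneg _) ⟨p, Finset.mem_univ p, this⟩
    -- assemble the contradiction
    rw [Matrix.sub_mulVec, dotProduct_sub, hNh0] at hq
    rw [Matrix.sub_mulVec, dotProduct_sub, Matrix.smul_mulVec, dotProduct_smul,
      Matrix.smul_mulVec, dotProduct_smul, Matrix.one_mulVec, hNR, hww,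
      hRtr] at hq
    have hval : (((1 - ε : ℝ) : ℂ) • (((b : ℝ) : ℂ)⁻¹ * ((S : ℝ) : ℂ))
        - ((ε : ℂ) * ((S : ℝ) : ℂ) / b) • (1 : ℂ))
        = (((1 - 2 * ε) * S / b : ℝ) : ℂ) := by
      push_cast
      rw [smul_eq_mul, smul_eq_mul]
      field_simp
      ring
    rw [hval] at hq
    rw [zero_sub] at hq
    have hq0 := neg_nonneg.mp hq
    have hq' : ((1 - 2 * ε) * S / b : ℝ) ≤ 0 := by exact_mod_cast hq0
    have hbpos : (0 : ℝ) < b := by exact_mod_cast hb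
    have h12 : (0 : ℝ) < 1 - 2 * ε := by linarith
    have hpos : (0 : ℝ) < (1 - 2 * ε) * S / b := by positivity
    linarith
  obtain ⟨s₀, K₀, h₀⟩ := hCP
  unfold krausRank
  refine le_csInf ⟨s₀, K₀, h₀⟩ ?_
  rintro s ⟨Ks, hKs⟩
  exact key s Ks hKs

end
end
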